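/- Let Z ~ N(0,1) and ρ, σ > 0. Then E[(X − 2ρ) 1{X > 2ρ}] ≤ (σ/√(2π)) exp(−ρ²/(2σ²)) · (√(1 + 4σ²/ρ²) − 1)/(√(1 + 4σ²/ρ²) + 1), where X = ρ + σZ ~ N(ρ, σ²). -/

import Mathlib

open MeasureTheory ProbabilityTheory Real Set Filter
open scoped ENNReal NNReal

private lemma gauss_aux1 (σ2 u s Gv : ℝ) (hσ : 0 < σ2) (hG : 0 < Gv) (hs : 0 < s)
    (h2 : s ^ 2 = u ^ 2 + 4 * σ2) (hus : u ≤ s) :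
    -Gv ≤ 2 * σ2 * ((-(u / σ2) * Gv * (u + s) - Gv * (1 + u / s)) / (u + s) ^ 2) := by
  have hw : 0 < u + s := by nlinarith
  have hrw : 2 * σ2 * ((-(u / σ2) * Gv * (u + s) - Gv * (1 + u / s)) / (u + s) ^ 2)
      = (-(2 * u * Gv * (u + s) * s) - 2 * σ2 * Gv * s - 2 * σ2 * Gv * u)
        / (s * (u + s) ^ 2) := by
    field_simp
    ring
  rw [hrw, le_div_iff₀ (by positivity)]
  have cert : (-(2 * u * Gv * (u + s) * s) - 2 * σ2 * Gv * s - 2 * σ2 * Gv * u)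
      - (-Gv * (s * (u + s) ^ 2))
      = Gv * s * (s ^ 2 - u ^ 2 - 4 * σ2) + 2 * σ2 * Gv * (s - u) := by ring
  have h0 : Gv * s * (s ^ 2 - u ^ 2 - 4 * σ2) = 0 := by rw [h2]; ring
  have h1 : 0 ≤ 2 * σ2 * Gv * (s - u) :=
    mul_nonneg (by positivity) (sub_nonneg.2 hus)
  linarith

private lemma gauss_aux2 (σ2 u s Gv : ℝ) (hσ : 0 < σ2) (hG : 0 < Gv) (hs : 0 < s)
    (hu : 0 < u) :
    2 * σ2 * ((-(u / σ2) * Gv * (u + s) - Gv * (1 + u / s)) / (u + s) ^ 2) ≤ 0 := by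
  have hw : 0 < u + s := by linarith
  have hA : -(u / σ2) * Gv * (u + s) - Gv * (1 + u / s) ≤ 0 := by
    have h1 : 0 < u / σ2 * Gv * (u + s) := by positivity
    have h2 : 0 < Gv * (1 + u / s) := by positivity
    nlinarith
  have : (-(u / σ2) * Gv * (u + s) - Gv * (1 + u / s)) / (u + s) ^ 2 ≤ 0 :=
    div_nonpos_iff.2 (Or.inr ⟨hA, (sq_nonneg _)⟩)
  exact mul_nonpos_of_nonneg_of_nonpos (by positivity) this

/-- For `X ~ N(ρ, σ²)` with `ρ, σ > 0`,
`E[(X − 2ρ) 1{X > 2ρ}] ≤ (σ/√(2π)) exp(−ρ²/(2σ²)) · (√(1+4σ²/ρ²) − 1)/(√(1+4σ²/ρ²) + 1)`. -/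
theorem gaussian_excess_bound (ρ σ : ℝ) (hρ : 0 < ρ) (hσ : 0 < σ) :
    ∫ x in Set.Ioi (2 * ρ), (x - 2 * ρ) ∂(gaussianReal ρ (σ ^ 2).toNNReal)
      ≤ σ / Real.sqrt (2 * Real.pi) * Real.exp (-ρ ^ 2 / (2 * σ ^ 2)) *
        ((Real.sqrt (1 + 4 * σ ^ 2 / ρ ^ 2) - 1) /
          (Real.sqrt (1 + 4 * σ ^ 2 / ρ ^ 2) + 1)) := by
  have hσ2 : (0 : ℝ) < σ ^ 2 := by positivity
  have hπ : (0 : ℝ) < π := Real.pi_pos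
  set v : NNReal := (σ ^ 2).toNNReal with hvdef
  have hvr : (v : ℝ) = σ ^ 2 := Real.coe_toNNReal _ hσ2.le
  have hv0 : v ≠ 0 := by
    rw [hvdef, ne_eq, Real.toNNReal_eq_zero, not_le]; exact hσ2
  set c : ℝ := (Real.sqrt (2 * π * σ ^ 2))⁻¹ with hcdef
  have hc : 0 < c := by positivity
  set G : ℝ → ℝ := fun x => c * Real.exp (-(x - ρ) ^ 2 / (2 * σ ^ 2)) with hGdef
  have hGeq : ∀ x, gaussianPDFReal ρ v x = G x := fun x => by
    simp only [gaussianPDFReal, hvr, hGdef, hcdef]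
  have hGpos : ∀ x, 0 < G x := fun x => by rw [hGdef]; positivity
  have hGint : Integrable G :=
    (integrable_gaussianPDFReal ρ v).congr (ae_of_all _ hGeq)
  -- derivative of G
  have hG' : ∀ x : ℝ, HasDerivAt G (-((x - ρ) / σ ^ 2) * G x) x := by
    intro x
    have h0 : HasDerivAt (fun y : ℝ => (y - ρ) ^ 2) (2 * (x - ρ)) x := by
      exact (((hasDerivAt_id x).sub_const ρ).pow 2).congr_deriv (by simp)
    have h1 : HasDerivAt (fun y : ℝ => -(y - ρ) ^ 2 / (2 * σ ^ 2)) (-((x - ρ) / σ ^ 2)) x := by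
      have := h0.neg.div_const (2 * σ ^ 2)
      refine this.congr_deriv ?_
      field_simp
    have h2 := h1.exp.const_mul c
    refine h2.congr_deriv ?_
    simp only [hGdef]
    ring
  -- G tends to 0 at infinity
  have hsub : Tendsto (fun x : ℝ => x - ρ) atTop atTop := by
    simpa [sub_eq_add_neg] using tendsto_atTop_add_const_right atTop (-ρ) tendsto_id
  have hGtop : Tendsto G atTop (nhds 0) := by
    have h0 : Tendsto (fun x : ℝ => (x - ρ) ^ 2) atTop atTop :=
      (tendsto_pow_atTop (two_ne_zero)).comp hsub
    have h1 : Tendsto (fun x : ℝ => (x - ρ) ^ 2 / (2 * σ ^ 2)) atTop atTop :=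
      h0.atTop_div_const (by positivity)
    have h2 : Tendsto (fun x : ℝ => -(x - ρ) ^ 2 / (2 * σ ^ 2)) atTop atBot := by
      have h2' : Tendsto (fun x : ℝ => -((x - ρ) ^ 2 / (2 * σ ^ 2))) atTop atBot :=
        tendsto_neg_atTop_atBot.comp h1
      refine h2'.congr fun x => by ring
    have h3 := Real.tendsto_exp_atBot.comp h2
    rw [hGdef]
    simpa [Function.comp] using h3.const_mul c
  -- the comparison function machinery
  set s : ℝ → ℝ := fun x => Real.sqrt ((x - ρ) ^ 2 + 4 * σ ^ 2) with hsdef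
  have hs2 : ∀ x, s x ^ 2 = (x - ρ) ^ 2 + 4 * σ ^ 2 := fun x =>
    Real.sq_sqrt (by positivity)
  have hspos : ∀ x, 0 < s x := fun x => Real.sqrt_pos.2 (by positivity)
  have hsu : ∀ x, x - ρ ≤ s x := fun x => by
    have h1 : |x - ρ| ≤ s x := by
      rw [hsdef, ← Real.sqrt_sq_eq_abs]
      exact Real.sqrt_le_sqrt (by nlinarith)
    exact (le_abs_self _).trans h1
  have hwpos : ∀ x, 0 < x - ρ + s x := fun x => by
    nlinarith [hs2 x, hspos x, hsu x, hσ2]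
  have hs' : ∀ x, HasDerivAt s ((x - ρ) / s x) x := by
    intro x
    have h1 : HasDerivAt (fun y : ℝ => (y - ρ) ^ 2 + 4 * σ ^ 2) (2 * (x - ρ)) x := by
      simpa using (((hasDerivAt_id x).sub_const ρ).pow 2).add_const (4 * σ ^ 2)
    have h2 := h1.sqrt (by show (x - ρ) ^ 2 + 4 * σ ^ 2 ≠ 0; positivity)
    have h3 : HasDerivAt s (2 * (x - ρ) / (2 * s x)) x := h2
    rw [show (x - ρ) / s x = 2 * (x - ρ) / (2 * s x) from
      (mul_div_mul_left _ _ two_ne_zero).symm]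
    exact h3
  have hw' : ∀ x, HasDerivAt (fun y => y - ρ + s y) (1 + (x - ρ) / s x) x := fun x =>
    ((hasDerivAt_id x).sub_const ρ).add (hs' x)
  -- D and its derivative
  have hD' : ∀ x, HasDerivAt (fun y => 2 * σ ^ 2 * (G y / (y - ρ + s y)))
      (2 * σ ^ 2 * ((-((x - ρ) / σ ^ 2) * G x * (x - ρ + s x) - G x * (1 + (x - ρ) / s x))
        / (x - ρ + s x) ^ 2)) x := fun x =>
    (((hG' x).div (hw' x) (hwpos x).ne')).const_mul (2 * σ ^ 2)
  have hDtop : Tendsto (fun x => 2 * σ ^ 2 * (G x / (x - ρ + s x))) atTop (nhds 0) := by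
    have hwtop : Tendsto (fun x : ℝ => x - ρ + s x) atTop atTop :=
      tendsto_atTop_mono (fun x => le_add_of_nonneg_right (Real.sqrt_nonneg _)) hsub
    have h1 := (hGtop.mul hwtop.inv_tendsto_atTop).const_mul (2 * σ ^ 2)
    simpa [div_eq_mul_inv] using h1
  -- key inequalities
  have hkey1 : ∀ x : ℝ, -(2 * σ ^ 2 * ((-((x - ρ) / σ ^ 2) * G x * (x - ρ + s x)
        - G x * (1 + (x - ρ) / s x)) / (x - ρ + s x) ^ 2)) ≤ G x := fun x =>
    neg_le.mpr (gauss_aux1 (σ ^ 2) (x - ρ) (s x) (G x) hσ2 (hGpos x) (hspos x) (hs2 x) (hsu x))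
  have hkey2 : ∀ x ∈ Ioi (2 * ρ), (0 : ℝ) ≤
      -(2 * σ ^ 2 * ((-((x - ρ) / σ ^ 2) * G x * (x - ρ + s x)
        - G x * (1 + (x - ρ) / s x)) / (x - ρ + s x) ^ 2)) := fun x hx =>
    neg_nonneg.2 (gauss_aux2 (σ ^ 2) (x - ρ) (s x) (G x) hσ2 (hGpos x) (hspos x)
      (by simp only [mem_Ioi] at hx; linarith))
  have hDtopneg : Tendsto (fun x => -(2 * σ ^ 2 * (G x / (x - ρ + s x)))) atTop (nhds 0) := by
    simpa using hDtop.neg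
  -- FTC for the comparison function
  have hDderiv : ∀ x ∈ Ici (2 * ρ), HasDerivAt (fun y => -(2 * σ ^ 2 * (G y / (y - ρ + s y))))
      (-(2 * σ ^ 2 * ((-((x - ρ) / σ ^ 2) * G x * (x - ρ + s x) - G x * (1 + (x - ρ) / s x))
        / (x - ρ + s x) ^ 2))) x := fun x _ => (hD' x).neg
  have hTailEq : ∫ x in Ioi (2 * ρ),
      -(2 * σ ^ 2 * ((-((x - ρ) / σ ^ 2) * G x * (x - ρ + s x) - G x * (1 + (x - ρ) / s x))
        / (x - ρ + s x) ^ 2))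
      = 0 - -(2 * σ ^ 2 * (G (2 * ρ) / (2 * ρ - ρ + s (2 * ρ)))) :=
    integral_Ioi_of_hasDerivAt_of_nonneg' hDderiv hkey2 hDtopneg
  have hTailInt : IntegrableOn (fun x =>
      -(2 * σ ^ 2 * ((-((x - ρ) / σ ^ 2) * G x * (x - ρ + s x) - G x * (1 + (x - ρ) / s x))
        / (x - ρ + s x) ^ 2))) (Ioi (2 * ρ)) :=
    integrableOn_Ioi_deriv_of_nonneg' hDderiv hkey2 hDtopneg
  have hTail : 2 * σ ^ 2 * (G (2 * ρ) / (2 * ρ - ρ + s (2 * ρ)))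
      ≤ ∫ x in Ioi (2 * ρ), G x := by
    have hmono := setIntegral_mono_on hTailInt hGint.integrableOn measurableSet_Ioi
      (fun x _ => hkey1 x)
    rw [hTailEq] at hmono
    linarith
  -- FTC for the first moment part
  have hF' : ∀ x ∈ Ici (2 * ρ), HasDerivAt (fun y => -σ ^ 2 * G y) ((x - ρ) * G x) x := by
    intro x _
    have := (hG' x).const_mul (-σ ^ 2)
    refine this.congr_deriv ?_
    field_simp
  have hFpos : ∀ x ∈ Ioi (2 * ρ), (0 : ℝ) ≤ (x - ρ) * G x := fun x hx => by
    simp only [mem_Ioi] at hx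
    exact mul_nonneg (by linarith) (hGpos x).le
  have hFtop : Tendsto (fun x => -σ ^ 2 * G x) atTop (nhds 0) := by
    simpa using hGtop.const_mul (-σ ^ 2)
  have hI1 : ∫ x in Ioi (2 * ρ), (x - ρ) * G x = σ ^ 2 * G (2 * ρ) := by
    have := integral_Ioi_of_hasDerivAt_of_nonneg' hF' hFpos hFtop
    rw [this]; ring
  have hI1int : IntegrableOn (fun x => (x - ρ) * G x) (Ioi (2 * ρ)) :=
    integrableOn_Ioi_deriv_of_nonneg' hF' hFpos hFtop
  -- convert the Gaussian integral to a Lebesgue integral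
  have hconv : ∫ x in Ioi (2 * ρ), (x - 2 * ρ) ∂(gaussianReal ρ v)
      = ∫ x in Ioi (2 * ρ), G x * (x - 2 * ρ) := by
    rw [gaussianReal_of_var_ne_zero ρ hv0,
      show gaussianPDF ρ v = (fun x => ((fun x => (gaussianPDFReal ρ v x).toNNReal) x : ℝ≥0∞))
        from rfl,
      setIntegral_withDensity_eq_setIntegral_smul
        ((measurable_gaussianPDFReal ρ v).real_toNNReal) _ measurableSet_Ioi]
    refine setIntegral_congr_fun measurableSet_Ioi fun x _ => ?_
    rw [NNReal.smul_def, Real.coe_toNNReal _ (gaussianPDFReal_nonneg ρ v x), hGeq x, smul_eq_mul]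
  have hsplit : ∫ x in Ioi (2 * ρ), G x * (x - 2 * ρ)
      = (∫ x in Ioi (2 * ρ), (x - ρ) * G x) - ρ * ∫ x in Ioi (2 * ρ), G x := by
    have h1 : ∫ x in Ioi (2 * ρ), G x * (x - 2 * ρ)
        = ∫ x in Ioi (2 * ρ), ((x - ρ) * G x - ρ * G x) :=
      setIntegral_congr_fun measurableSet_Ioi (fun x _ => by ring)
    rw [h1, integral_sub hI1int ((hGint.const_mul ρ).integrableOn), integral_const_mul]
  -- final algebra
  have hS0 : (0 : ℝ) ≤ Real.sqrt (1 + 4 * σ ^ 2 / ρ ^ 2) := Real.sqrt_nonneg _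
  have hsS : s (2 * ρ) = ρ * Real.sqrt (1 + 4 * σ ^ 2 / ρ ^ 2) := by
    rw [hsdef]
    show Real.sqrt ((2 * ρ - ρ) ^ 2 + 4 * σ ^ 2) = _
    rw [show (2 * ρ - ρ) ^ 2 + 4 * σ ^ 2 = ρ ^ 2 * (1 + 4 * σ ^ 2 / ρ ^ 2) by
      field_simp; ring]
    rw [Real.sqrt_mul (sq_nonneg ρ), Real.sqrt_sq hρ.le]
  have hG2 : G (2 * ρ) = (Real.sqrt (2 * π) * σ)⁻¹ * Real.exp (-ρ ^ 2 / (2 * σ ^ 2)) := by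
    rw [hGdef]
    show (Real.sqrt (2 * π * σ ^ 2))⁻¹ * Real.exp (-(2 * ρ - ρ) ^ 2 / (2 * σ ^ 2)) = _
    rw [show 2 * π * σ ^ 2 = (2 * π) * σ ^ 2 by ring,
      Real.sqrt_mul (by positivity) (σ ^ 2), Real.sqrt_sq hσ.le,
      show (2 * ρ - ρ) ^ 2 = ρ ^ 2 by ring]
  rw [hconv, hsplit, hI1]
  have hfinal : σ ^ 2 * G (2 * ρ) - ρ * (2 * σ ^ 2 * (G (2 * ρ) / (2 * ρ - ρ + s (2 * ρ))))
      = σ / Real.sqrt (2 * Real.pi) * Real.exp (-ρ ^ 2 / (2 * σ ^ 2)) *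
        ((Real.sqrt (1 + 4 * σ ^ 2 / ρ ^ 2) - 1) /
          (Real.sqrt (1 + 4 * σ ^ 2 / ρ ^ 2) + 1)) := by
    rw [hsS, hG2]
    set S := Real.sqrt (1 + 4 * σ ^ 2 / ρ ^ 2)
    rw [show 2 * ρ - ρ + ρ * S = ρ * (1 + S) by ring]
    have h1S : (0 : ℝ) < 1 + S := by linarith
    have hsqrt2π : (0 : ℝ) < Real.sqrt (2 * π) := Real.sqrt_pos.2 (by positivity)
    field_simp
    ring
  rw [← hfinal]
  have hmul := mul_le_mul_of_nonneg_left hTail hρ.le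
  linarith
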